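/- For f : ℝ³ → ℂ, ‖f‖_{L^{4/3}(ℝ³)} ≲ ‖f‖_{L²(ℝ³)}^{1/4} ‖xf‖_{L²(ℝ³)}^{3/4}, where xf(x) = |x|f(x). -/

import Mathlib

open MeasureTheory

open Metric ENNReal

noncomputable abbrev E3 := EuclideanSpace ℝ (Fin 3)
noncomputable def vE : ℝ≥0∞ := volume (Metric.ball (0 : E3) 1)
lemma vE_pos : 0 < vE := measure_ball_pos _ _ one_pos
lemma vE_lt_top : vE < ⊤ := measure_ball_lt_top

lemma cover_compl {R : ℝ} (hR : 0 < R) :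
    (closedBall (0:E3) R)ᶜ ⊆ ⋃ k : ℕ, closedBall (0:E3) (2^(k+1) * R) \ closedBall (0:E3) (2^k * R) := by
  intro x hx
  simp only [Set.mem_compl_iff, mem_closedBall, dist_zero_right, not_le] at hx
  have hex : ∃ k : ℕ, ‖x‖ ≤ 2 ^ k * R := by
    obtain ⟨k, hk⟩ := pow_unbounded_of_one_lt (‖x‖ / R) (one_lt_two (α := ℝ))
    exact ⟨k, by rw [div_lt_iff₀ hR] at hk; linarith [hk]⟩
  classical
  obtain ⟨m, hm⟩ := Nat.exists_eq_succ_of_ne_zero (n := Nat.find hex) (by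
    intro h
    have := Nat.find_spec hex
    rw [h] at this
    simp at this
    nlinarith)
  refine Set.mem_iUnion.2 ⟨m, ?_, ?_⟩
  · have := Nat.find_spec hex
    rw [hm] at this
    simpa [mem_closedBall, dist_zero_right] using this
  · have := Nat.find_min hex (m := m) (by omega)
    simpa [mem_closedBall, dist_zero_right] using this

lemma annulus_term {R : ℝ} (hR : 0 < R) (k : ℕ) :
    ∫⁻ x in closedBall (0:E3) (2^(k+1) * R) \ closedBall (0:E3) (2^k * R),
      ((‖x‖₊ : ℝ≥0∞)) ^ (-4:ℝ) ∂volume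
    ≤ vE * ENNReal.ofReal (8 / R) * (2⁻¹ : ℝ≥0∞) ^ k := by
  have hpos : (0:ℝ) < 2 ^ k * R := by positivity
  have hbound : ∀ x ∈ closedBall (0:E3) (2^(k+1) * R) \ closedBall (0:E3) (2^k * R),
      ((‖x‖₊ : ℝ≥0∞)) ^ (-4:ℝ) ≤ ENNReal.ofReal ((2^k * R) ^ (-4:ℝ)) := by
    intro x hx
    have hx2 : 2 ^ k * R < ‖x‖ := by
      have := hx.2
      simpa [mem_closedBall, dist_zero_right, not_le] using this
    have h1 : ENNReal.ofReal (2^k * R) ≤ (‖x‖₊ : ℝ≥0∞) := by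
      rw [← enorm_eq_nnnorm, ← ofReal_norm]
      exact ENNReal.ofReal_le_ofReal hx2.le
    rw [← ENNReal.ofReal_rpow_of_pos hpos]
    rw [show ((-4:ℝ)) = -(4:ℝ) by norm_num, ENNReal.rpow_neg, ENNReal.rpow_neg]
    exact ENNReal.inv_le_inv.2 (ENNReal.rpow_le_rpow h1 (by norm_num))
  calc ∫⁻ x in _, ((‖x‖₊ : ℝ≥0∞)) ^ (-4:ℝ) ∂volume
      ≤ ∫⁻ _x in closedBall (0:E3) (2^(k+1) * R) \ closedBall (0:E3) (2^k * R),
          ENNReal.ofReal ((2^k * R) ^ (-4:ℝ)) ∂volume :=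
        setLIntegral_mono' (measurableSet_closedBall.diff measurableSet_closedBall) hbound
    _ = ENNReal.ofReal ((2^k * R) ^ (-4:ℝ)) *
          volume (closedBall (0:E3) (2^(k+1) * R) \ closedBall (0:E3) (2^k * R)) :=
        setLIntegral_const _ _
    _ ≤ ENNReal.ofReal ((2^k * R) ^ (-4:ℝ)) * volume (closedBall (0:E3) (2^(k+1) * R)) := by
        gcongr
        exact Set.diff_subset
    _ = ENNReal.ofReal ((2^k * R) ^ (-4:ℝ)) * (ENNReal.ofReal ((2^(k+1) * R)^3) * vE) := by
        rw [Measure.addHaar_closedBall _ _ (by positivity)]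
        norm_num [vE]
    _ = vE * ENNReal.ofReal (8 / R) * (2⁻¹ : ℝ≥0∞) ^ k := by
        rw [← mul_assoc, ← ENNReal.ofReal_mul (by positivity)]
        have h2 : ((2:ℝ)^k * R) ^ (-4:ℝ) * (2^(k+1) * R)^3 = (8 / R) * (2⁻¹)^k := by
          rw [show ((-4:ℝ)) = -(4:ℝ) by norm_num, Real.rpow_neg hpos.le]
          rw [show ((2:ℝ)^k*R) ^ (4:ℝ) = ((2:ℝ)^k*R)^(4:ℕ) by
            rw [show ((4:ℝ)) = ((4:ℕ):ℝ) by norm_num, Real.rpow_natCast]]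
          field_simp
          rw [one_div_pow]
          field_simp
          ring
        rw [h2, ENNReal.ofReal_mul (by positivity), ENNReal.ofReal_pow (by norm_num),
          ENNReal.ofReal_inv_of_pos (by norm_num), ENNReal.ofReal_ofNat]
        ring

lemma outer_bound {R : ℝ} (hR : 0 < R) :
    ∫⁻ x in (closedBall (0:E3) R)ᶜ, ((‖x‖₊ : ℝ≥0∞)) ^ (-4:ℝ) ∂volume
      ≤ 16 * vE / ENNReal.ofReal R := by
  calc ∫⁻ x in (closedBall (0:E3) R)ᶜ, ((‖x‖₊ : ℝ≥0∞)) ^ (-4:ℝ) ∂volume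
      ≤ ∫⁻ x in ⋃ k : ℕ, closedBall (0:E3) (2^(k+1) * R) \ closedBall (0:E3) (2^k * R),
          ((‖x‖₊ : ℝ≥0∞)) ^ (-4:ℝ) ∂volume := lintegral_mono_set (cover_compl hR)
    _ ≤ ∑' k : ℕ, ∫⁻ x in closedBall (0:E3) (2^(k+1) * R) \ closedBall (0:E3) (2^k * R),
          ((‖x‖₊ : ℝ≥0∞)) ^ (-4:ℝ) ∂volume := lintegral_iUnion_le _ _
    _ ≤ ∑' k : ℕ, vE * ENNReal.ofReal (8 / R) * (2⁻¹ : ℝ≥0∞) ^ k :=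
        ENNReal.tsum_le_tsum fun k => annulus_term hR k
    _ = vE * ENNReal.ofReal (8 / R) * ∑' k : ℕ, (2⁻¹ : ℝ≥0∞) ^ k := ENNReal.tsum_mul_left
    _ = vE * ENNReal.ofReal (8 / R) * 2 := by
        rw [ENNReal.tsum_geometric]
        norm_num [ENNReal.one_sub_inv_two]
    _ = 16 * vE / ENNReal.ofReal R := by
        rw [ENNReal.ofReal_div_of_pos hR, div_eq_mul_inv, div_eq_mul_inv]
        rw [show ENNReal.ofReal 8 = 8 by norm_num]
        ring

lemma hconj32 : Real.HolderConjugate (3/2) 3 := ⟨by norm_num, by norm_num, by norm_num⟩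

lemma ball_piece {ψ : E3 → ℝ≥0∞} (hψ : Measurable ψ) {R : ℝ} (hR : 0 ≤ R) :
    ∫⁻ x in closedBall (0:E3) R, ψ x ^ ((4:ℝ)/3) ∂volume
      ≤ (∫⁻ x, ψ x ^ (2:ℝ) ∂volume) ^ ((2:ℝ)/3) * (ENNReal.ofReal (R^3) * vE) ^ ((1:ℝ)/3) := by
  have H := ENNReal.lintegral_mul_le_Lp_mul_Lq (volume.restrict (closedBall (0:E3) R)) hconj32
    (f := fun x => ψ x ^ ((4:ℝ)/3)) (g := fun _ => 1)
    (hψ.pow_const _).aemeasurable aemeasurable_const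
  simp only [Pi.mul_apply, mul_one] at H
  refine H.trans ?_
  gcongr ?_ * ?_
  · calc (∫⁻ x in closedBall (0:E3) R, (ψ x ^ ((4:ℝ)/3)) ^ ((3:ℝ)/2) ∂volume) ^ (1/((3:ℝ)/2))
        = (∫⁻ x in closedBall (0:E3) R, ψ x ^ (2:ℝ) ∂volume) ^ ((2:ℝ)/3) := by
          congr 1
          · apply lintegral_congr fun x => by
              rw [← ENNReal.rpow_mul]; norm_num
          · norm_num
      _ ≤ (∫⁻ x, ψ x ^ (2:ℝ) ∂volume) ^ ((2:ℝ)/3) := by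
          gcongr
          exact Measure.restrict_le_self
  · gcongr
    simp only [ENNReal.one_rpow]
    rw [setLIntegral_one, Measure.addHaar_closedBall _ _ hR]
    norm_num [vE]

lemma compl_piece {ψ : E3 → ℝ≥0∞} (hψ : Measurable ψ) {R : ℝ} (hR : 0 < R) :
    ∫⁻ x in (closedBall (0:E3) R)ᶜ, ψ x ^ ((4:ℝ)/3) ∂volume
      ≤ (∫⁻ x, ((‖x‖₊:ℝ≥0∞) * ψ x) ^ (2:ℝ) ∂volume) ^ ((2:ℝ)/3)
        * (16 * vE / ENNReal.ofReal R) ^ ((1:ℝ)/3) := by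
  have hnorm : Measurable fun x : E3 => (‖x‖₊ : ℝ≥0∞) := measurable_nnnorm.coe_nnreal_ennreal
  have step1 : ∫⁻ x in (closedBall (0:E3) R)ᶜ, ψ x ^ ((4:ℝ)/3) ∂volume
      ≤ ∫⁻ x in (closedBall (0:E3) R)ᶜ,
          (((‖x‖₊:ℝ≥0∞) * ψ x) ^ ((4:ℝ)/3)) * ((‖x‖₊:ℝ≥0∞)) ^ (-((4:ℝ)/3)) ∂volume := by
    apply setLIntegral_mono' measurableSet_closedBall.compl
    intro x hx
    have hxR : R < ‖x‖ := by
      simpa [mem_closedBall, dist_zero_right, not_le] using hx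
    have hne : (‖x‖₊ : ℝ≥0∞) ≠ 0 := by
      simp only [ne_eq, ENNReal.coe_eq_zero, nnnorm_eq_zero]
      intro h
      rw [h] at hxR
      simp at hxR
      linarith
    have htop : (‖x‖₊ : ℝ≥0∞) ≠ ⊤ := ENNReal.coe_ne_top
    rw [ENNReal.mul_rpow_of_nonneg _ _ (by norm_num : (0:ℝ) ≤ 4/3)]
    rw [mul_comm ((‖x‖₊:ℝ≥0∞) ^ ((4:ℝ)/3)) _, mul_assoc,
      ← ENNReal.rpow_add _ _ hne htop]
    norm_num
  refine step1.trans ?_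
  have H := ENNReal.lintegral_mul_le_Lp_mul_Lq (volume.restrict (closedBall (0:E3) R)ᶜ) hconj32
    (f := fun x => ((‖x‖₊:ℝ≥0∞) * ψ x) ^ ((4:ℝ)/3))
    (g := fun x => ((‖x‖₊:ℝ≥0∞)) ^ (-((4:ℝ)/3)))
    ((hnorm.mul hψ).pow_const _).aemeasurable (hnorm.pow_const _).aemeasurable
  simp only [Pi.mul_apply] at H
  refine H.trans ?_
  gcongr ?_ * ?_
  · calc (∫⁻ x in (closedBall (0:E3) R)ᶜ, (((‖x‖₊:ℝ≥0∞) * ψ x) ^ ((4:ℝ)/3)) ^ ((3:ℝ)/2) ∂volume)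
          ^ (1/((3:ℝ)/2))
        = (∫⁻ x in (closedBall (0:E3) R)ᶜ, ((‖x‖₊:ℝ≥0∞) * ψ x) ^ (2:ℝ) ∂volume) ^ ((2:ℝ)/3) := by
          congr 1
          · apply lintegral_congr fun x => by
              rw [← ENNReal.rpow_mul]; norm_num
          · norm_num
      _ ≤ (∫⁻ x, ((‖x‖₊:ℝ≥0∞) * ψ x) ^ (2:ℝ) ∂volume) ^ ((2:ℝ)/3) := by
          gcongr
          exact Measure.restrict_le_self
  · gcongr
    calc ∫⁻ x in (closedBall (0:E3) R)ᶜ, (((‖x‖₊:ℝ≥0∞)) ^ (-((4:ℝ)/3))) ^ (3:ℝ) ∂volume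
        = ∫⁻ x in (closedBall (0:E3) R)ᶜ, ((‖x‖₊:ℝ≥0∞)) ^ (-4:ℝ) ∂volume := by
          apply lintegral_congr fun x => by
            rw [← ENNReal.rpow_mul]; norm_num
      _ ≤ 16 * vE / ENNReal.ofReal R := outer_bound hR

noncomputable def KE : ℝ≥0∞ := vE ^ ((1:ℝ)/3) + (16 * vE) ^ ((1:ℝ)/3)

lemma core {ψ : E3 → ℝ≥0∞} (hψ : Measurable ψ) :
    ∫⁻ x, ψ x ^ ((4:ℝ)/3) ∂volume
      ≤ KE * (∫⁻ x, ψ x ^ (2:ℝ) ∂volume) ^ ((1:ℝ)/6)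
          * (∫⁻ x, ((‖x‖₊:ℝ≥0∞) * ψ x) ^ (2:ℝ) ∂volume) ^ ((1:ℝ)/2) := by
  have hnorm : Measurable fun x : E3 => (‖x‖₊ : ℝ≥0∞) := measurable_nnnorm.coe_nnreal_ennreal
  set A := ∫⁻ x, ψ x ^ (2:ℝ) ∂volume with hA
  set B := ∫⁻ x, ((‖x‖₊:ℝ≥0∞) * ψ x) ^ (2:ℝ) ∂volume with hB
  -- case B = 0
  by_cases hB0 : B = 0
  · have h0 := (lintegral_eq_zero_iff ((hnorm.mul hψ).pow_const _)).1 hB0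
    have hne : ∀ᵐ (x : E3) ∂volume, x ≠ 0 := by
      rw [ae_iff]
      simpa using measure_singleton (0 : E3)
    have hz : (fun x => ψ x ^ ((4:ℝ)/3)) =ᵐ[volume] 0 := by
      filter_upwards [h0, hne] with x hx hxne
      simp only [Pi.zero_apply] at hx ⊢
      rw [ENNReal.rpow_eq_zero_iff] at hx
      have hxz : ψ x = 0 := by
        rcases hx with ⟨h1, _⟩ | ⟨h1, h2⟩
        · rcases mul_eq_zero.1 h1 with h | h
          · exfalso; exact hxne (by simpa using h)
          · exact h
        · norm_num at h2
      rw [hxz, ENNReal.zero_rpow_of_pos (by norm_num)]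
    rw [lintegral_congr_ae hz]
    simp
  -- case A = 0
  by_cases hA0 : A = 0
  · have h0 := (lintegral_eq_zero_iff (hψ.pow_const _)).1 hA0
    have hz : (fun x => ψ x ^ ((4:ℝ)/3)) =ᵐ[volume] 0 := by
      filter_upwards [h0] with x hx
      simp only [Pi.zero_apply] at hx ⊢
      rw [ENNReal.rpow_eq_zero_iff] at hx
      have hxz : ψ x = 0 := by
        rcases hx with ⟨h1, _⟩ | ⟨_, h2⟩
        · exact h1
        · norm_num at h2
      rw [hxz, ENNReal.zero_rpow_of_pos (by norm_num)]
    rw [lintegral_congr_ae hz]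
    simp
  have hKpos : 0 < KE := by
    have := vE_pos
    have h1 : (0:ℝ≥0∞) < vE ^ ((1:ℝ)/3) := ENNReal.rpow_pos this vE_lt_top.ne
    exact lt_of_lt_of_le h1 le_self_add
  -- case A = ⊤
  by_cases hAtop : A = ⊤
  · rw [hAtop]
    rw [ENNReal.top_rpow_of_pos (by norm_num)]
    rw [ENNReal.mul_top hKpos.ne']
    rw [ENNReal.top_mul]
    · exact le_top
    · exact fun h => hB0 (by
        have := ENNReal.rpow_eq_zero_iff.1 h
        rcases this with ⟨h1, _⟩ | ⟨_, h2⟩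
        · exact h1
        · norm_num at h2)
  by_cases hBtop : B = ⊤
  · rw [hBtop, ENNReal.top_rpow_of_pos (by norm_num), ENNReal.mul_top]
    · exact le_top
    · refine mul_ne_zero hKpos.ne' ?_
      exact fun h => hA0 (by
        rcases ENNReal.rpow_eq_zero_iff.1 h with ⟨h1, _⟩ | ⟨_, h2⟩
        · exact h1
        · norm_num at h2)
  -- main case
  set a := A.toReal with ha_def
  set b := B.toReal with hb_def
  have ha : 0 < a := ENNReal.toReal_pos hA0 hAtop
  have hb : 0 < b := ENNReal.toReal_pos hB0 hBtop
  set R := (b / a) ^ ((1:ℝ)/2) with hRdef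
  have hRpos : 0 < R := Real.rpow_pos_of_pos (div_pos hb ha) _
  have hAa : A = ENNReal.ofReal a := (ENNReal.ofReal_toReal hAtop).symm
  have hBb : B = ENNReal.ofReal b := (ENNReal.ofReal_toReal hBtop).symm
  have hT1 : A ^ ((2:ℝ)/3) * (ENNReal.ofReal (R^3) * vE) ^ ((1:ℝ)/3)
      = vE ^ ((1:ℝ)/3) * ENNReal.ofReal (a ^ ((1:ℝ)/6) * b ^ ((1:ℝ)/2)) := by
    rw [hAa, ENNReal.ofReal_rpow_of_pos ha,
      ENNReal.mul_rpow_of_nonneg _ _ (by norm_num : (0:ℝ) ≤ 1/3),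
      ENNReal.ofReal_rpow_of_pos (by positivity),
      show (R^3) ^ ((1:ℝ)/3) = R from by
        rw [← Real.rpow_natCast R 3, ← Real.rpow_mul hRpos.le]; norm_num,
      ← mul_assoc, ← ENNReal.ofReal_mul (by positivity), mul_comm]
    congr 2
    rw [hRdef, Real.div_rpow hb.le ha.le,
      div_eq_mul_inv (b ^ ((1:ℝ)/2)) (a ^ ((1:ℝ)/2)), ← Real.rpow_neg ha.le,
      mul_comm (b ^ ((1:ℝ)/2)) (a ^ (-((1:ℝ)/2))), ← mul_assoc, ← Real.rpow_add ha,
      show (2:ℝ)/3 + -((1:ℝ)/2) = 1/6 by norm_num]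
  have hT2 : B ^ ((2:ℝ)/3) * (16 * vE / ENNReal.ofReal R) ^ ((1:ℝ)/3)
      = (16 * vE) ^ ((1:ℝ)/3) * ENNReal.ofReal (a ^ ((1:ℝ)/6) * b ^ ((1:ℝ)/2)) := by
    rw [hBb, ENNReal.ofReal_rpow_of_pos hb,
      ENNReal.div_rpow_of_nonneg _ _ (by norm_num : (0:ℝ) ≤ 1/3),
      ENNReal.ofReal_rpow_of_pos hRpos,
      show ENNReal.ofReal (b^((2:ℝ)/3)) * ((16*vE)^((1:ℝ)/3) / ENNReal.ofReal (R^((1:ℝ)/3)))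
        = (16*vE)^((1:ℝ)/3) * (ENNReal.ofReal (b^((2:ℝ)/3)) / ENNReal.ofReal (R^((1:ℝ)/3))) from by
        rw [div_eq_mul_inv ((16*vE)^((1:ℝ)/3)) (ENNReal.ofReal (R^((1:ℝ)/3))),
          div_eq_mul_inv (ENNReal.ofReal (b^((2:ℝ)/3))) (ENNReal.ofReal (R^((1:ℝ)/3)))]; ring,
      ← ENNReal.ofReal_div_of_pos (Real.rpow_pos_of_pos hRpos _)]
    congr 2
    rw [hRdef, ← Real.rpow_mul (div_pos hb ha).le,
      show (1:ℝ)/2 * (1/3) = 1/6 by norm_num,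
      Real.div_rpow hb.le ha.le, div_div_eq_mul_div,
      mul_comm (b ^ ((2:ℝ)/3)) (a ^ ((1:ℝ)/6)), mul_div_assoc, ← Real.rpow_sub hb,
      show (2:ℝ)/3 - (1:ℝ)/6 = 1/2 by norm_num]
  calc ∫⁻ x, ψ x ^ ((4:ℝ)/3) ∂volume
      = (∫⁻ x in closedBall (0:E3) R, ψ x ^ ((4:ℝ)/3) ∂volume)
        + ∫⁻ x in (closedBall (0:E3) R)ᶜ, ψ x ^ ((4:ℝ)/3) ∂volume :=
        (lintegral_add_compl _ measurableSet_closedBall).symm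
    _ ≤ A ^ ((2:ℝ)/3) * (ENNReal.ofReal (R^3) * vE) ^ ((1:ℝ)/3)
        + B ^ ((2:ℝ)/3) * (16 * vE / ENNReal.ofReal R) ^ ((1:ℝ)/3) :=
        add_le_add (ball_piece hψ hRpos.le) (compl_piece hψ hRpos)
    _ = KE * ENNReal.ofReal (a ^ ((1:ℝ)/6) * b ^ ((1:ℝ)/2)) := by
        rw [hT1, hT2, KE, add_mul]
    _ = KE * A ^ ((1:ℝ)/6) * B ^ ((1:ℝ)/2) := by
        rw [hAa, hBb, ENNReal.ofReal_rpow_of_pos ha, ENNReal.ofReal_rpow_of_pos hb,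
          ENNReal.ofReal_mul (by positivity), mul_assoc]

/-- Weighted interpolation inequality in `ℝ³`:
`‖f‖_{L^{4/3}} ≲ ‖f‖_{L²}^{1/4} ‖xf‖_{L²}^{3/4}`. -/
theorem stmt_11 :
    ∃ C > 0, ∀ f : EuclideanSpace ℝ (Fin 3) → ℂ,
      eLpNorm f (ENNReal.ofReal (4 / 3)) volume ≤
        ENNReal.ofReal C *
          (eLpNorm f 2 volume) ^ ((1 : ℝ) / 4) *
          (eLpNorm (fun x : EuclideanSpace ℝ (Fin 3) => (‖x‖ : ℂ) * f x) 2 volume)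
            ^ ((3 : ℝ) / 4) := by
  refine ⟨(KE ^ ((3:ℝ)/4)).toReal + 1, by positivity, fun f => ?_⟩
  set C : ℝ := (KE ^ ((3:ℝ)/4)).toReal + 1 with hC
  have hKtop : KE ≠ ⊤ := by
    rw [KE]
    refine ENNReal.add_ne_top.2 ⟨?_, ?_⟩
    · exact (ENNReal.rpow_lt_top_of_nonneg (by norm_num) vE_lt_top.ne).ne
    · exact (ENNReal.rpow_lt_top_of_nonneg (by norm_num)
        (ENNReal.mul_ne_top (by norm_num) vE_lt_top.ne)).ne
  have hKC : KE ^ ((3:ℝ)/4) ≤ ENNReal.ofReal C := by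
    have h1 : KE ^ ((3:ℝ)/4) ≠ ⊤ := (ENNReal.rpow_lt_top_of_nonneg (by norm_num) hKtop).ne
    rw [← ENNReal.ofReal_toReal h1]
    exact ENNReal.ofReal_le_ofReal (by rw [hC]; linarith)
  -- measurable minorant
  obtain ⟨g, hgm, hgle, hgeq⟩ :=
    exists_measurable_le_lintegral_eq (volume : Measure E3)
      (fun x => (‖f x‖₊ : ℝ≥0∞) ^ ((4:ℝ)/3))
  set ψ : E3 → ℝ≥0∞ := fun x => g x ^ ((3:ℝ)/4) with hψdef
  have hψm : Measurable ψ := hgm.pow_const _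
  have hψle : ∀ x, ψ x ≤ (‖f x‖₊ : ℝ≥0∞) := fun x => by
    calc g x ^ ((3:ℝ)/4) ≤ ((‖f x‖₊ : ℝ≥0∞) ^ ((4:ℝ)/3)) ^ ((3:ℝ)/4) :=
          ENNReal.rpow_le_rpow (hgle x) (by norm_num)
      _ = (‖f x‖₊ : ℝ≥0∞) := by
          rw [← ENNReal.rpow_mul, show (4:ℝ)/3 * (3/4) = 1 by norm_num, ENNReal.rpow_one]
  have hψ43 : ∀ x, ψ x ^ ((4:ℝ)/3) = g x := fun x => by
    rw [hψdef, ← ENNReal.rpow_mul, show (3:ℝ)/4 * (4/3) = 1 by norm_num, ENNReal.rpow_one]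
  -- identify LHS
  have hp0 : (ENNReal.ofReal (4/3) : ℝ≥0∞) ≠ 0 := by
    simp [ENNReal.ofReal_eq_zero]
  have hLHS : eLpNorm f (ENNReal.ofReal (4/3)) volume
      = (∫⁻ x, ψ x ^ ((4:ℝ)/3) ∂volume) ^ ((3:ℝ)/4) := by
    rw [eLpNorm_eq_lintegral_rpow_enorm_toReal hp0 ENNReal.ofReal_ne_top,
      ENNReal.toReal_ofReal (by norm_num : (0:ℝ) ≤ 4/3)]
    simp only [enorm_eq_nnnorm]
    rw [show ∫⁻ x, ψ x ^ ((4:ℝ)/3) ∂volume = ∫⁻ x, g x ∂volume from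
      lintegral_congr fun x => hψ43 x, ← hgeq]
    norm_num
  rw [hLHS]
  -- apply core and monotonicity
  have hcore := core hψm
  have hA_mono : ∫⁻ x, ψ x ^ (2:ℝ) ∂volume ≤ ∫⁻ x, ((‖f x‖₊:ℝ≥0∞)) ^ (2:ℝ) ∂volume :=
    lintegral_mono fun x => ENNReal.rpow_le_rpow (hψle x) (by norm_num)
  have hB_mono : ∫⁻ x, ((‖x‖₊:ℝ≥0∞) * ψ x) ^ (2:ℝ) ∂volume
      ≤ ∫⁻ x, ((‖x‖₊:ℝ≥0∞) * (‖f x‖₊:ℝ≥0∞)) ^ (2:ℝ) ∂volume :=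
    lintegral_mono fun x => ENNReal.rpow_le_rpow
      (mul_le_mul_of_nonneg_left (hψle x) (by positivity)) (by norm_num)
  have step : (∫⁻ x, ψ x ^ ((4:ℝ)/3) ∂volume) ^ ((3:ℝ)/4)
      ≤ (KE * (∫⁻ x, ((‖f x‖₊:ℝ≥0∞)) ^ (2:ℝ) ∂volume) ^ ((1:ℝ)/6)
          * (∫⁻ x, ((‖x‖₊:ℝ≥0∞) * (‖f x‖₊:ℝ≥0∞)) ^ (2:ℝ) ∂volume) ^ ((1:ℝ)/2)) ^ ((3:ℝ)/4) := by
    gcongr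
    exact hcore.trans (by gcongr)
  refine step.trans ?_
  -- expand the rpow of products
  rw [ENNReal.mul_rpow_of_nonneg _ _ (by norm_num : (0:ℝ) ≤ 3/4),
    ENNReal.mul_rpow_of_nonneg _ _ (by norm_num : (0:ℝ) ≤ 3/4)]
  -- identify the eLpNorms on the RHS
  have hL2 : eLpNorm f 2 volume = (∫⁻ x, ((‖f x‖₊:ℝ≥0∞)) ^ (2:ℝ) ∂volume) ^ ((1:ℝ)/2) := by
    rw [eLpNorm_eq_lintegral_rpow_enorm_toReal (by norm_num) (by norm_num)]
    norm_num
    simp only [enorm_eq_nnnorm]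
  have hL2w : eLpNorm (fun x : E3 => (‖x‖ : ℂ) * f x) 2 volume
      = (∫⁻ x, ((‖x‖₊:ℝ≥0∞) * (‖f x‖₊:ℝ≥0∞)) ^ (2:ℝ) ∂volume) ^ ((1:ℝ)/2) := by
    rw [eLpNorm_eq_lintegral_rpow_enorm_toReal (by norm_num) (by norm_num)]
    norm_num
    simp [enorm_eq_nnnorm, Complex.nnnorm_real]
  rw [hL2, hL2w, ← ENNReal.rpow_mul, ← ENNReal.rpow_mul, ← ENNReal.rpow_mul,
    show (1:ℝ)/6 * (3/4) = 1/2 * (1/4) by norm_num,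
    show (1:ℝ)/2 * (3/4) = 1/2 * (3/4) by norm_num,
    ENNReal.rpow_mul, ENNReal.rpow_mul]
  gcongr
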